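/- Let n ≥ 2 and let x_1, x_2, …, x_n be positive integers with x_i ≥ 2 for all i and Σ_{i=1}^n x_i = M. Define f(x_1, …, x_n) = Σ_{1 ≤ i < j ≤ n} x_i x_j. Then f(x_1, …, x_n) attains its minimum value (over all such integer tuples with the given sum M) if and only if there exists l ∈ {1, …, n} such that x_l = M − 2(n−1) and x_i = 2 for all i ≠ l. -/
import Mathlib

/-- `fsum n x = Σ_{1 ≤ i < j ≤ n} x_i x_j`, the sum of products over all
unordered pairs of distinct indices. -/
def fsum (n : ℕ) (x : Fin n → ℕ) : ℕ :=
  ∑ i : Fin n, ∑ j ∈ Finset.univ.filter (fun j => i < j), x i * x j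

lemma sq_sum_eq (n : ℕ) (x : Fin n → ℕ) :
    (∑ i, x i)^2 = ∑ i, (x i)^2 + 2 * fsum n x := by
  have hswap : (∑ i : Fin n, ∑ j ∈ Finset.univ.filter (fun j => i < j), x i * x j)
      = ∑ j : Fin n, ∑ i ∈ Finset.univ.filter (fun i => i < j), x i * x j :=
    Finset.sum_comm' (by simp)
  have huniv : ∀ i : Fin n, ∑ j, x i * x j =
      (∑ j ∈ Finset.univ.filter (fun j => i < j), x i * x j) +
      ((∑ j ∈ Finset.univ.filter (fun j => j < i), x i * x j) + x i * x i) := by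
    intro i
    rw [← Finset.sum_filter_add_sum_filter_not Finset.univ (fun j => i < j)]
    congr 1
    have h2 : Finset.univ.filter (fun j => ¬ i < j) =
        insert i (Finset.univ.filter (fun j : Fin n => j < i)) := by
      ext j
      simp only [Finset.mem_filter, Finset.mem_univ, true_and, not_lt, Finset.mem_insert]
      constructor
      · intro h; rcases lt_or_eq_of_le h with h|h
        · exact Or.inr h
        · exact Or.inl h
      · rintro (rfl|h); · exact le_refl _
        · exact le_of_lt h
    rw [h2, Finset.sum_insert (by simp)]
    ring
  rw [sq, Finset.sum_mul_sum]
  simp_rw [huniv]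
  rw [Finset.sum_add_distrib, Finset.sum_add_distrib]
  have h3 : (∑ i : Fin n, ∑ j ∈ Finset.univ.filter (fun j => j < i), x i * x j) = fsum n x := by
    rw [fsum, hswap]
    exact Finset.sum_congr rfl fun j _ => Finset.sum_congr rfl fun i _ => mul_comm _ _
  rw [h3]
  simp [fsum, sq]
  ring

lemma sum_sq_le (n : ℕ) (a : Fin n → ℕ) : ∑ i, (a i)^2 ≤ (∑ i, a i)^2 := by
  rw [sq, Finset.sum_mul]
  apply Finset.sum_le_sum
  intro i _
  rw [sq]
  exact Nat.mul_le_mul_left _ (Finset.single_le_sum (fun j _ => Nat.zero_le _) (Finset.mem_univ i))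

lemma sum_sq_eq (n : ℕ) (hn : 0 < n) (a : Fin n → ℕ) (h : ∑ i, (a i)^2 = (∑ i, a i)^2) :
    ∃ l : Fin n, ∀ i, i ≠ l → a i = 0 := by
  by_cases hall : ∀ i, a i = 0
  · exact ⟨⟨0, hn⟩, fun i _ => hall i⟩
  push_neg at hall
  obtain ⟨l, hl⟩ := hall
  refine ⟨l, fun i hil => ?_⟩
  by_contra hi
  -- each term a i ^ 2 ≤ a i * ∑ a, and sums are equal
  have hterm : ∀ j : Fin n, (a j)^2 = a j * ∑ k, a k := by
    have hle : ∀ j ∈ Finset.univ, (a j)^2 ≤ a j * ∑ k, a k := fun j _ => by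
      rw [sq]
      exact Nat.mul_le_mul_left _
        (Finset.single_le_sum (fun k _ => Nat.zero_le _) (Finset.mem_univ j))
    have heq : ∑ j, (a j)^2 = ∑ j, a j * ∑ k, a k := by
      rw [h, sq, Finset.sum_mul]
    intro j
    exact (Finset.sum_eq_sum_iff_of_le hle).1 heq j (Finset.mem_univ j)
  have hS : 0 < ∑ k, a k :=
    lt_of_lt_of_le (Nat.pos_of_ne_zero hl)
      (Finset.single_le_sum (fun k _ => Nat.zero_le _) (Finset.mem_univ l))
  have hval : ∀ j : Fin n, a j ≠ 0 → a j = ∑ k, a k := by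
    intro j hj
    have := hterm j
    rw [sq] at this
    exact Nat.eq_of_mul_eq_mul_left (Nat.pos_of_ne_zero hj) this
  have h1 := hval l hl
  have h2 := hval i hi
  have hpair : a i + a l ≤ ∑ k, a k := by
    have : ∑ k ∈ ({i, l} : Finset (Fin n)), a k ≤ ∑ k, a k :=
      Finset.sum_le_sum_of_subset (Finset.subset_univ _)
    rwa [Finset.sum_pair hil] at this
  omega

lemma sum_split (n : ℕ) (l : Fin n) (f : Fin n → ℕ) :
    ∑ i, f i = f l + ∑ i ∈ Finset.univ.erase l, f i :=
  (Finset.add_sum_erase _ f (Finset.mem_univ l)).symm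

lemma sum_const_off (n : ℕ) (l : Fin n) (f : Fin n → ℕ) (hf : ∀ i, i ≠ l → f i = 2) :
    ∑ i, f i = f l + 2 * (n - 1) := by
  rw [sum_split n l f]
  congr 1
  rw [Finset.sum_congr rfl (fun i hi => hf i (Finset.mem_erase.1 hi).1), Finset.sum_const,
    Finset.card_erase_of_mem (Finset.mem_univ l), Finset.card_univ, Fintype.card_fin]
  ring

lemma sq_decomp (n M : ℕ) (z : Fin n → ℕ) (hz : ∀ i, 2 ≤ z i) (hs : ∑ i, z i = M) :
    (∑ i, (z i - 2) = M - 2 * n) ∧ 2 * n ≤ M ∧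
    ∑ i, (z i)^2 = ∑ i, (z i - 2)^2 + 4 * (M - 2 * n) + 4 * n := by
  have h1 : ∑ i, z i = ∑ i, ((z i - 2) + 2) :=
    Finset.sum_congr rfl fun i _ => by have := hz i; omega
  rw [Finset.sum_add_distrib, Finset.sum_const, Finset.card_univ, Fintype.card_fin,
    smul_eq_mul] at h1
  have hM : 2 * n ≤ M := by omega
  have ha : ∑ i, (z i - 2) = M - 2 * n := by omega
  refine ⟨ha, hM, ?_⟩
  have h2 : ∑ i, (z i)^2 = ∑ i, ((z i - 2)^2 + 4 * (z i - 2) + 4) := by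
    apply Finset.sum_congr rfl
    intro i _
    obtain ⟨a, ha⟩ : ∃ a, z i = a + 2 := ⟨z i - 2, by have := hz i; omega⟩
    rw [ha]
    simp only [Nat.add_sub_cancel]
    ring
  rw [h2, Finset.sum_add_distrib, Finset.sum_add_distrib, ← Finset.mul_sum, ha,
    Finset.sum_const, Finset.card_univ, Fintype.card_fin, smul_eq_mul]
  ring

theorem stmt16 (n : ℕ) (hn : 2 ≤ n) (M : ℕ) (x : Fin n → ℕ)
    (hx : ∀ i, 2 ≤ x i) (hsum : ∑ i, x i = M) :
    (∀ y : Fin n → ℕ, (∀ i, 2 ≤ y i) → ∑ i, y i = M → fsum n x ≤ fsum n y) ↔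
    (∃ l : Fin n, x l = M - 2 * (n - 1) ∧ ∀ i : Fin n, i ≠ l → x i = 2) := by
  obtain ⟨hax, hM, hx2⟩ := sq_decomp n M x hx hsum
  -- comparison principle
  have hcomp : ∀ y : Fin n → ℕ, ∑ i, y i = M →
      (fsum n x ≤ fsum n y ↔ ∑ i, (y i)^2 ≤ ∑ i, (x i)^2) := by
    intro y hy
    have e1 := sq_sum_eq n x
    have e2 := sq_sum_eq n y
    rw [hsum] at e1
    rw [hy] at e2
    omega
  constructor
  · intro hmin
    -- extremal candidate
    set l₀ : Fin n := ⟨0, by omega⟩ with hl₀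
    set y₀ : Fin n → ℕ := fun i => if i = l₀ then M - 2 * (n - 1) else 2 with hy₀
    have hy₀2 : ∀ i, 2 ≤ y₀ i := by
      intro i
      simp only [hy₀]
      split <;> omega
    have hy₀l : y₀ l₀ = M - 2 * (n - 1) := by simp [hy₀]
    have hy₀sum : ∑ i, y₀ i = M := by
      rw [sum_const_off n l₀ y₀ (fun i hi => by simp [hy₀, hi]), hy₀l]
      omega
    obtain ⟨hay, _, hy2⟩ := sq_decomp n M y₀ hy₀2 hy₀sum
    -- ∑ (y₀ i - 2)^2 = (M - 2n)^2
    have hysq : ∑ i, (y₀ i - 2)^2 = (M - 2 * n)^2 := by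
      rw [Finset.sum_eq_single l₀]
      · rw [hy₀l]; congr 1; omega
      · intro i _ hi; simp [hy₀, hi]
      · intro h; exact absurd (Finset.mem_univ l₀) h
    have hle := (hcomp y₀ hy₀sum).1 (hmin y₀ hy₀2 hy₀sum)
    have hub : ∑ i, (x i - 2)^2 ≤ (M - 2 * n)^2 := by
      have := sum_sq_le n (fun i => x i - 2)
      rwa [hax] at this
    have heq : ∑ i, (x i - 2)^2 = (∑ i, (x i - 2))^2 := by rw [hax]; omega
    obtain ⟨l, hl⟩ := sum_sq_eq n (by omega) (fun i => x i - 2) heq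
    refine ⟨l, ?_, fun i hi => by have := hx i; have := hl i hi; omega⟩
    have hxrest : ∀ i, i ≠ l → x i = 2 := fun i hi => by
      have := hx i; have := hl i hi; omega
    have := sum_const_off n l x hxrest
    omega
  · rintro ⟨l, hxl, hrest⟩ y hy2 hysum
    rw [hcomp y hysum]
    obtain ⟨hay, _, hy2d⟩ := sq_decomp n M y hy2 hysum
    have hxsq : ∑ i, (x i - 2)^2 = (M - 2 * n)^2 := by
      rw [Finset.sum_eq_single l]
      · rw [hxl]; have := hx l; congr 1; omega
      · intro i _ hi; simp [hrest i hi]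
      · intro h; exact absurd (Finset.mem_univ l) h
    have hub : ∑ i, (y i - 2)^2 ≤ (M - 2 * n)^2 := by
      have := sum_sq_le n (fun i => y i - 2)
      rwa [hay] at this
    omega
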